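/- Let Ψ and Φ be positive semidefinite self-adjoint operators on a finite-dimensional real inner product space with ‖Φ − Ψ‖_1 ≤ Λ_2(Ψ)²/(4‖Ψ‖). Then ϰ(Φ) ≤ 2 ϰ(Ψ) and tr Φ ≤ (5/4) tr Ψ. -/

import Mathlib

open scoped RealInnerProductSpace

noncomputable section

namespace BWB8

variable {E : Type*} [NormedAddCommGroup E] [InnerProductSpace ℝ E] [FiniteDimensional ℝ E]

/-- Operator norm of a linear endomorphism. -/
def lmOpNorm (L : E →ₗ[ℝ] E) : ℝ := ⨆ x : {x : E // ‖x‖ ≤ 1}, ‖L x.val‖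

/-- `Λ₁(L)² = Σ_k λ_k(L)² = tr(L²)` for a symmetric operator `L`. -/
def Lam1sq (L : E →ₗ[ℝ] E) : ℝ := LinearMap.trace ℝ E (L ∘ₗ L)

/-- `Λ₂(L)² = Σ_{k ≥ 2} λ_k(L)²` (eigenvalues in nonincreasing order) for a positive
semidefinite symmetric operator `L`; indeed `Λ₂² = tr(L²) - ‖L‖²`. -/
def Lam2sq (L : E →ₗ[ℝ] E) : ℝ := LinearMap.trace ℝ E (L ∘ₗ L) - lmOpNorm L ^ 2

/-- `ϰ(L) = (Λ₁(L) Λ₂(L))^{-1/2}`. -/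
def varkappa (L : E →ₗ[ℝ] E) : ℝ :=
  (Real.sqrt (Real.sqrt (Lam1sq L) * Real.sqrt (Lam2sq L)))⁻¹

/-- Nuclear (1-Schatten) norm of a symmetric operator, via the variational characterization
`‖T‖₁ = sup { tr (T ∘ C) : C symmetric, ‖C‖ ≤ 1 }`. -/
def nucNorm (T : E →ₗ[ℝ] E) : ℝ :=
  ⨆ C : {C : E →ₗ[ℝ] E // C.IsSymmetric ∧ lmOpNorm C ≤ 1},
    LinearMap.trace ℝ E (T ∘ₗ C.val)

set_option linter.unusedSectionVars false

instance : Nonempty {x : E // ‖x‖ ≤ 1} := ⟨⟨0, by simp⟩⟩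

lemma lm_bdd (L : E →ₗ[ℝ] E) :
    BddAbove (Set.range fun x : {x : E // ‖x‖ ≤ 1} => ‖L x.val‖) := by
  refine ⟨‖LinearMap.toContinuousLinearMap L‖, ?_⟩
  rintro _ ⟨x, rfl⟩
  calc ‖L x.val‖ = ‖LinearMap.toContinuousLinearMap L x.val‖ := rfl
    _ ≤ ‖LinearMap.toContinuousLinearMap L‖ * ‖x.val‖ :=
        (LinearMap.toContinuousLinearMap L).le_opNorm x.val
    _ ≤ ‖LinearMap.toContinuousLinearMap L‖ * 1 := by
        exact mul_le_mul_of_nonneg_left x.2 (norm_nonneg _)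
    _ = _ := mul_one _

lemma apply_le_lmOpNorm (L : E →ₗ[ℝ] E) {x : E} (hx : ‖x‖ ≤ 1) : ‖L x‖ ≤ lmOpNorm L :=
  le_ciSup (lm_bdd L) ⟨x, hx⟩

lemma lmOpNorm_le (L : E →ₗ[ℝ] E) {M : ℝ} (h : ∀ x : E, ‖x‖ ≤ 1 → ‖L x‖ ≤ M) :
    lmOpNorm L ≤ M :=
  ciSup_le fun x => h x.val x.2

lemma lmOpNorm_nonneg (L : E →ₗ[ℝ] E) : 0 ≤ lmOpNorm L := by
  have := apply_le_lmOpNorm L (x := 0) (by simp)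
  simpa using (norm_nonneg (L 0)).trans this

lemma apply_le_mul (L : E →ₗ[ℝ] E) (x : E) : ‖L x‖ ≤ lmOpNorm L * ‖x‖ := by
  rcases eq_or_ne x 0 with rfl | hx
  · simp
  · have hxn : (0:ℝ) < ‖x‖ := norm_pos_iff.mpr hx
    have h1 : ‖L (‖x‖⁻¹ • x)‖ ≤ lmOpNorm L := by
      apply apply_le_lmOpNorm
      rw [norm_smul, norm_inv, norm_norm]
      rw [inv_mul_cancel₀ hxn.ne']
    rw [map_smul, norm_smul, norm_inv, norm_norm] at h1
    calc ‖L x‖ = ‖x‖ * (‖x‖⁻¹ * ‖L x‖) := by field_simp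
      _ ≤ ‖x‖ * lmOpNorm L := mul_le_mul_of_nonneg_left h1 hxn.le
      _ = lmOpNorm L * ‖x‖ := mul_comm _ _

lemma trace_eq_sum_inner {ι : Type*} [Fintype ι] [DecidableEq ι]
    (b : OrthonormalBasis ι ℝ E) (T : E →ₗ[ℝ] E) :
    LinearMap.trace ℝ E T = ∑ i, ⟪b i, T (b i)⟫ := by
  rw [LinearMap.trace_eq_matrix_trace ℝ b.toBasis, Matrix.trace]
  congr 1
  ext i
  rw [Matrix.diag_apply, LinearMap.toMatrix_apply, OrthonormalBasis.coe_toBasis,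
    OrthonormalBasis.coe_toBasis_repr_apply, b.repr_apply_apply]

lemma trace_sq_nonneg {T : E →ₗ[ℝ] E} (hT : T.IsSymmetric) :
    0 ≤ LinearMap.trace ℝ E (T ∘ₗ T) := by
  rw [trace_eq_sum_inner (stdOrthonormalBasis ℝ E)]
  apply Finset.sum_nonneg
  intro i _
  rw [LinearMap.comp_apply, ← hT]
  exact real_inner_self_nonneg

lemma nuc_bdd (T : E →ₗ[ℝ] E) :
    BddAbove (Set.range fun C : {C : E →ₗ[ℝ] E // C.IsSymmetric ∧ lmOpNorm C ≤ 1} =>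
      LinearMap.trace ℝ E (T ∘ₗ C.val)) := by
  refine ⟨(Module.finrank ℝ E : ℝ) * lmOpNorm T, ?_⟩
  rintro _ ⟨C, rfl⟩
  set b := stdOrthonormalBasis ℝ E
  show LinearMap.trace ℝ E (T ∘ₗ C.val) ≤ _
  rw [trace_eq_sum_inner b]
  calc ∑ i, ⟪b i, (T ∘ₗ C.val) (b i)⟫
      ≤ ∑ _i : Fin (Module.finrank ℝ E), lmOpNorm T := by
        apply Finset.sum_le_sum
        intro i _
        have h1 : ⟪b i, (T ∘ₗ C.val) (b i)⟫ ≤ ‖b i‖ * ‖T (C.val (b i))‖ :=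
          real_inner_le_norm _ _
        have hb : ‖b i‖ = 1 := b.orthonormal.1 i
        have h2 : ‖C.val (b i)‖ ≤ 1 := (apply_le_lmOpNorm C.val (by rw [hb])).trans C.2.2
        have h3 : ‖T (C.val (b i))‖ ≤ lmOpNorm T * ‖C.val (b i)‖ := apply_le_mul _ _
        have h4 : lmOpNorm T * ‖C.val (b i)‖ ≤ lmOpNorm T * 1 :=
          mul_le_mul_of_nonneg_left h2 (lmOpNorm_nonneg T)
        rw [hb] at h1
        nlinarith [lmOpNorm_nonneg T]
    _ = (Module.finrank ℝ E : ℝ) * lmOpNorm T := by simp [Finset.sum_const, nsmul_eq_mul]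

lemma trace_comp_le_nucNorm (T C : E →ₗ[ℝ] E) (hCs : C.IsSymmetric) (hC : lmOpNorm C ≤ 1) :
    LinearMap.trace ℝ E (T ∘ₗ C) ≤ nucNorm T :=
  le_ciSup (nuc_bdd T) ⟨C, hCs, hC⟩

lemma nucNorm_nonneg (T : E →ₗ[ℝ] E) : 0 ≤ nucNorm T := by
  have h0 : (0 : E →ₗ[ℝ] E).IsSymmetric := fun x y => by simp
  have := trace_comp_le_nucNorm T 0 h0
    (by apply lmOpNorm_le; intro x _; simpa using zero_le_one)
  simpa using this

/-- rank-one projection onto the span of `u`. -/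
def proj (u : E) : E →ₗ[ℝ] E where
  toFun x := ⟪u, x⟫ • u
  map_add' x y := by simp [inner_add_right, add_smul]
  map_smul' c x := by simp [real_inner_smul_right, mul_smul]

@[simp] lemma proj_apply (u x : E) : proj u x = ⟪u, x⟫ • u := rfl

lemma trace_comp_proj (T : E →ₗ[ℝ] E) (u : E) :
    LinearMap.trace ℝ E (T ∘ₗ proj u) = ⟪u, T u⟫ := by
  set b := stdOrthonormalBasis ℝ E
  rw [trace_eq_sum_inner b]
  have : ∀ i, ⟪b i, (T ∘ₗ proj u) (b i)⟫ = ⟪u, b i⟫ * ⟪b i, T u⟫ := by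
    intro i
    rw [LinearMap.comp_apply, proj_apply, map_smul, real_inner_smul_right]
  simp_rw [this]
  exact b.sum_inner_mul_inner u (T u)

/-- positivity of `a•Ψ - Ψ²`. -/
lemma key_pos {Ψ : E →ₗ[ℝ] E} (hs : Ψ.IsSymmetric) (hp : ∀ x, 0 ≤ ⟪x, Ψ x⟫) :
    (∀ x : E, 0 ≤ ⟪x, (lmOpNorm Ψ • Ψ - Ψ ∘ₗ Ψ) x⟫) ∧
      0 ≤ LinearMap.trace ℝ E (lmOpNorm Ψ • Ψ - Ψ ∘ₗ Ψ) := by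
  set a := lmOpNorm Ψ with ha
  have hn : Module.finrank ℝ E = Module.finrank ℝ E := rfl
  set v := hs.eigenvectorBasis hn
  set lam := hs.eigenvalues hn with hlam
  have hv : ∀ i, Ψ (v i) = lam i • v i := fun i => by
    exact_mod_cast hs.apply_eigenvectorBasis hn i
  have hvnorm : ∀ i, ‖v i‖ = 1 := fun i => v.orthonormal.1 i
  have hvv : ∀ i, ⟪v i, v i⟫ = (1:ℝ) := fun i => by
    rw [real_inner_self_eq_norm_sq, hvnorm]; norm_num
  have hl0 : ∀ i, 0 ≤ lam i := by
    intro i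
    have := hp (v i)
    rwa [hv i, real_inner_smul_right, hvv i, mul_one] at this
  have hla : ∀ i, lam i ≤ a := by
    intro i
    have h1 : ‖Ψ (v i)‖ ≤ a := apply_le_lmOpNorm Ψ (by rw [hvnorm])
    rw [hv i, norm_smul, hvnorm, mul_one] at h1
    exact (le_abs_self _).trans (by rwa [Real.norm_eq_abs] at h1)
  have hco : ∀ i, 0 ≤ a * lam i - lam i ^ 2 := by
    intro i
    nlinarith [hl0 i, hla i]
  have hTv : ∀ (x : E) (i : _), ⟪v i, (a • Ψ - Ψ ∘ₗ Ψ) x⟫ = (a * lam i - lam i ^ 2) * ⟪v i, x⟫ := by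
    intro x i
    rw [LinearMap.sub_apply, inner_sub_right, LinearMap.smul_apply, real_inner_smul_right,
      LinearMap.comp_apply]
    rw [← hs (v i) (Ψ x), hv i, real_inner_smul_left, ← hs (v i) x, hv i, real_inner_smul_left]
    ring
  constructor
  · intro x
    have hsum := v.sum_inner_mul_inner x ((a • Ψ - Ψ ∘ₗ Ψ) x)
    rw [← hsum]
    apply Finset.sum_nonneg
    intro i _
    rw [hTv x i]
    have : ⟪x, v i⟫ = ⟪v i, x⟫ := real_inner_comm _ _
    rw [this]
    nlinarith [hco i, sq_nonneg ⟪v i, x⟫]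
  · rw [trace_eq_sum_inner v]
    apply Finset.sum_nonneg
    intro i _
    rw [hTv (v i) i, hvv i, mul_one]
    exact hco i

lemma exists_top {Φ : E →ₗ[ℝ] E} (hs : Φ.IsSymmetric) (hp : ∀ x, 0 ≤ ⟪x, Φ x⟫)
    (hd : Module.finrank ℝ E ≠ 0) :
    ∃ u : E, ‖u‖ = 1 ∧ Φ u = lmOpNorm Φ • u := by
  have hn : Module.finrank ℝ E = Module.finrank ℝ E := rfl
  set w := hs.eigenvectorBasis hn
  set nu := hs.eigenvalues hn with hnu
  have hw : ∀ i, Φ (w i) = nu i • w i := fun i => by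
    exact_mod_cast hs.apply_eigenvectorBasis hn i
  have hwnorm : ∀ i, ‖w i‖ = 1 := fun i => w.orthonormal.1 i
  have hwv : ∀ i, ⟪w i, w i⟫ = (1:ℝ) := fun i => by
    rw [real_inner_self_eq_norm_sq, hwnorm]; norm_num
  have hl0 : ∀ i, 0 ≤ nu i := by
    intro i
    have := hp (w i)
    rwa [hw i, real_inner_smul_right, hwv i, mul_one] at this
  have : Nonempty (Fin (Module.finrank ℝ E)) := by
    rwa [← Fin.pos_iff_nonempty, Nat.pos_iff_ne_zero]
  obtain ⟨i₀, hi₀⟩ := Finite.exists_max nu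
  set u := w i₀
  set mu := nu i₀ with hmu
  have hμeq : lmOpNorm Φ = mu := by
    apply le_antisymm
    · apply lmOpNorm_le
      intro x hx
      have hxsq : ∑ i, ⟪w i, x⟫ ^ 2 = ‖x‖ ^ 2 := by
        have := w.sum_inner_mul_inner x x
        rw [real_inner_self_eq_norm_sq] at this
        rw [← this]
        congr 1; ext i
        rw [sq, real_inner_comm x (w i)]
      have hΦx : ‖Φ x‖ ^ 2 = ∑ i, (nu i) ^ 2 * ⟪w i, x⟫ ^ 2 := by
        have h1 := w.sum_inner_mul_inner (Φ x) (Φ x)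
        rw [real_inner_self_eq_norm_sq] at h1
        rw [← h1]
        congr 1; ext i
        have h2 : ⟪w i, Φ x⟫ = nu i * ⟪w i, x⟫ := by
          rw [← hs (w i) x, hw i, real_inner_smul_left]
        have h3 : ⟪Φ x, w i⟫ = ⟪w i, Φ x⟫ := real_inner_comm _ _
        rw [h3, h2]; ring
      have hbound : ‖Φ x‖ ^ 2 ≤ mu ^ 2 * ‖x‖ ^ 2 := by
        rw [hΦx, ← hxsq, Finset.mul_sum]
        apply Finset.sum_le_sum
        intro i _
        have h5 : nu i ^ 2 ≤ mu ^ 2 := by nlinarith [hi₀ i, hl0 i]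
        exact mul_le_mul_of_nonneg_right h5 (sq_nonneg _)
      have hmu0 : 0 ≤ mu := hl0 i₀
      have h7 : ‖x‖ ^ 2 ≤ 1 := by nlinarith [norm_nonneg x]
      have h6 : ‖Φ x‖ ^ 2 ≤ mu ^ 2 := by nlinarith [sq_nonneg mu]
      exact (pow_le_pow_iff_left₀ (norm_nonneg _) hmu0 two_ne_zero).mp h6
    · have h1 : ⟪u, Φ u⟫ ≤ ‖u‖ * ‖Φ u‖ := real_inner_le_norm _ _
      have h2 : ⟪u, Φ u⟫ = mu := by rw [hw i₀, real_inner_smul_right, hwv i₀, mul_one]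
      have h3 : ‖Φ u‖ ≤ lmOpNorm Φ := apply_le_lmOpNorm Φ (by rw [hwnorm])
      rw [h2, hwnorm, one_mul] at h1
      linarith
  exact ⟨u, hwnorm i₀, by rw [hμeq]; exact hw i₀⟩

set_option maxHeartbeats 2000000 in
theorem statement8 (Ψ Φ : E →ₗ[ℝ] E)
    (hΨsym : Ψ.IsSymmetric) (hΦsym : Φ.IsSymmetric)
    (hΨpos : ∀ x : E, 0 ≤ ⟪x, Ψ x⟫) (hΦpos : ∀ x : E, 0 ≤ ⟪x, Φ x⟫)
    (hΛ₂ : 0 < Lam2sq Ψ)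
    (hnuc : nucNorm (Φ - Ψ) ≤ Lam2sq Ψ / (4 * lmOpNorm Ψ)) :
    varkappa Φ ≤ 2 * varkappa Ψ ∧
      LinearMap.trace ℝ E Φ ≤ (5 / 4) * LinearMap.trace ℝ E Ψ := by
  classical
  set a := lmOpNorm Ψ with ha
  set s := Lam2sq Ψ with hsdef
  set Δ := Φ - Ψ with hΔdef
  set δ := nucNorm Δ with hδdef
  -- dimension is nonzero
  have hn0 : Module.finrank ℝ E ≠ 0 := by
    intro h
    have hall : ∀ x : E, x = 0 := finrank_zero_iff_forall_zero.mp h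
    have hΨ0 : Ψ ∘ₗ Ψ = 0 := by
      ext x
      simpa using hall ((Ψ ∘ₗ Ψ) x)
    have : s = 0 - a ^ 2 := by rw [hsdef, Lam2sq, hΨ0, map_zero, ha]
    linarith only [sq_nonneg a, hΛ₂, this]
  have ha0 : 0 ≤ a := lmOpNorm_nonneg Ψ
  have hapos : 0 < a := by
    rcases ha0.lt_or_eq with h | h
    · exact h
    exfalso
    have hΨ0 : Ψ = 0 := by
      ext x
      have h1 : ‖Ψ x‖ ≤ a * ‖x‖ := apply_le_mul Ψ x
      rw [← h, zero_mul] at h1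
      simpa using norm_le_zero_iff.mp h1
    have hs0 : s = 0 - a ^ 2 := by
      rw [hsdef, Lam2sq, ha, hΨ0]; simp
    linarith only [sq_nonneg a, hΛ₂, hs0]
  obtain ⟨hposform, hpostr⟩ := key_pos hΨsym hΨpos
  have htr2 : LinearMap.trace ℝ E (Ψ ∘ₗ Ψ) ≤ a * LinearMap.trace ℝ E Ψ := by
    rw [map_sub, map_smul, smul_eq_mul] at hpostr
    linarith only [hpostr]
  have ht1 : Lam1sq Ψ = s + a ^ 2 := by rw [hsdef, Lam2sq, Lam1sq, ha]; ring
  have hδ0 : 0 ≤ δ := nucNorm_nonneg Δ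
  have hδs : δ ≤ s / (4 * a) := hnuc
  have hδ4a : δ * (4 * a) ≤ s := (le_div_iff₀ (by positivity)).mp hδs
  have h2aδ : 2 * (a * δ) ≤ s / 2 := by linarith only [hδ4a]
  have hΔsym : Δ.IsSymmetric := hΦsym.sub hΨsym
  -- generic lower bound for traces against Δ
  have htrick : ∀ S : E →ₗ[ℝ] E, S.IsSymmetric → lmOpNorm S ≤ a →
      -(a * δ) ≤ LinearMap.trace ℝ E (Δ ∘ₗ S) := by
    intro S hSs hSa
    have hCsym : ((-a⁻¹) • S).IsSymmetric := by
      intro x y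
      simp only [LinearMap.smul_apply, real_inner_smul_left, real_inner_smul_right]
      rw [hSs x y]
    have hC1 : lmOpNorm ((-a⁻¹) • S) ≤ 1 := by
      apply lmOpNorm_le
      intro x hx
      rw [LinearMap.smul_apply, norm_smul, Real.norm_eq_abs, abs_neg, abs_inv,
        abs_of_pos hapos]
      have h1 : ‖S x‖ ≤ a := le_trans (apply_le_lmOpNorm S hx) hSa
      calc a⁻¹ * ‖S x‖ ≤ a⁻¹ * a := mul_le_mul_of_nonneg_left h1 (by positivity)
        _ = 1 := inv_mul_cancel₀ hapos.ne'
    have h2 := trace_comp_le_nucNorm Δ _ hCsym hC1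
    have hcs : Δ ∘ₗ ((-a⁻¹) • S) = (-a⁻¹) • (Δ ∘ₗ S) := by
      ext x
      simp
    rw [hcs, map_smul, smul_eq_mul] at h2
    have h3 := mul_le_mul_of_nonneg_left h2 ha0
    rw [← mul_assoc] at h3
    have h4 : a * -a⁻¹ = -1 := by field_simp
    rw [h4] at h3
    linarith only [h3]
  -- trace bound
  have hτΔ : LinearMap.trace ℝ E Δ ≤ δ := by
    have hid : (LinearMap.id : E →ₗ[ℝ] E).IsSymmetric := fun x y => rfl
    have := trace_comp_le_nucNorm Δ LinearMap.id hid
      (lmOpNorm_le _ (fun x hx => by simpa using hx))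
    simpa using this
  have htrΨnn : 0 ≤ LinearMap.trace ℝ E Ψ := by
    rw [trace_eq_sum_inner (stdOrthonormalBasis ℝ E)]
    exact Finset.sum_nonneg fun i _ => hΨpos _
  have htrΦ : LinearMap.trace ℝ E Φ ≤ (5 / 4) * LinearMap.trace ℝ E Ψ := by
    have h1 : LinearMap.trace ℝ E Δ
        = LinearMap.trace ℝ E Φ - LinearMap.trace ℝ E Ψ := by
      rw [hΔdef, map_sub]
    have hs_le : s ≤ a * LinearMap.trace ℝ E Ψ := by
      have h2 : s = LinearMap.trace ℝ E (Ψ ∘ₗ Ψ) - a ^ 2 := by rw [hsdef, Lam2sq, ha]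
      linarith only [h2, htr2, sq_nonneg a]
    have hδτ : δ ≤ LinearMap.trace ℝ E Ψ / 4 := by
      have h3 : s / (4 * a) ≤ a * LinearMap.trace ℝ E Ψ / (4 * a) :=
        (div_le_div_iff_of_pos_right (by positivity)).mpr hs_le
      have h4 : a * LinearMap.trace ℝ E Ψ / (4 * a) = LinearMap.trace ℝ E Ψ / 4 := by
        field_simp
      linarith only [hδs, h3, h4]
    linarith only [h1, hτΔ, hδτ, htrΨnn]
  -- Lam1sq bound
  have hΦeq : Φ = Ψ + Δ := by rw [hΔdef]; abel
  have hτΨΔ := htrick Ψ hΨsym (le_refl a)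
  have hτΔΔ : 0 ≤ LinearMap.trace ℝ E (Δ ∘ₗ Δ) := trace_sq_nonneg hΔsym
  have hL1 : Lam1sq Ψ / 2 ≤ Lam1sq Φ := by
    have h1 : Lam1sq Φ = Lam1sq Ψ + 2 * LinearMap.trace ℝ E (Δ ∘ₗ Ψ)
        + LinearMap.trace ℝ E (Δ ∘ₗ Δ) := by
      rw [Lam1sq, Lam1sq, hΦeq]
      rw [LinearMap.add_comp, LinearMap.comp_add, LinearMap.comp_add, map_add, map_add,
        map_add]
      rw [LinearMap.trace_comp_comm' Ψ Δ]
      ring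
    linarith only [h1, hτΨΔ, hτΔΔ, h2aδ, ht1, sq_nonneg a]
  have hL1pos : 0 < Lam1sq Ψ := by rw [ht1]; linarith only [hΛ₂, sq_nonneg a]
  -- top eigenvector machinery
  obtain ⟨u, hu1, huΦ⟩ := exists_top hΦsym hΦpos hn0
  set μ := lmOpNorm Φ with hμdef
  have hμ0 : 0 ≤ μ := lmOpNorm_nonneg Φ
  set P := proj u with hPdef
  have huu : ⟪u, u⟫ = (1:ℝ) := by rw [real_inner_self_eq_norm_sq, hu1]; norm_num
  have hPsym : P.IsSymmetric := by
    intro x y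
    rw [hPdef, proj_apply, proj_apply, real_inner_smul_left, real_inner_smul_right,
      real_inner_comm x u]
    ring
  have hPPx : ∀ x, P (P x) = P x := by
    intro x
    simp [hPdef, real_inner_smul_right, huu, hu1]
  have hΦPx : ∀ x, Φ (P x) = μ • P x := by
    intro x
    simp only [hPdef, proj_apply, map_smul, huΦ]
    rw [smul_smul, smul_smul, mul_comm]
  have hPΦx : ∀ x, P (Φ x) = μ • P x := by
    intro x
    simp only [hPdef, proj_apply]
    rw [← hΦsym u x, huΦ, real_inner_smul_left, mul_smul]
  have hτP : LinearMap.trace ℝ E P = 1 := by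
    have h1 := trace_comp_proj LinearMap.id u
    rw [LinearMap.id_comp] at h1
    rw [hPdef, h1, LinearMap.id_apply, huu]
  set Q := (LinearMap.id : E →ₗ[ℝ] E) - P with hQdef
  have hQx : ∀ x, Q x = x - P x := by intro x; simp [hQdef]
  have hQsym : Q.IsSymmetric := by
    intro x y
    simp only [hQdef, LinearMap.sub_apply, LinearMap.id_apply, inner_sub_left,
      inner_sub_right]
    rw [hPsym x y]
  have hQQx : ∀ x, Q (Q x) = Q x := by
    intro x
    rw [hQx (Q x), hQx x, map_sub, hPPx x]
    abel
  have hQcontr : ∀ x : E, ‖Q x‖ ≤ ‖x‖ := by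
    intro x
    have hQx2 : Q x = x - ⟪u, x⟫ • u := by rw [hQx x, hPdef]; rfl
    have h1 : ‖Q x‖ ^ 2 = ‖x‖ ^ 2 - ⟪u, x⟫ ^ 2 := by
      rw [← real_inner_self_eq_norm_sq, ← real_inner_self_eq_norm_sq, hQx2]
      simp only [inner_sub_left, inner_sub_right, real_inner_smul_left,
        real_inner_smul_right, huu]
      rw [real_inner_comm x u]
      ring
    have h2 : ‖Q x‖ ^ 2 ≤ ‖x‖ ^ 2 := by linarith only [h1, sq_nonneg ⟪u, x⟫]
    exact (pow_le_pow_iff_left₀ (norm_nonneg _) (norm_nonneg _) two_ne_zero).mp h2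
  have hconj : ∀ A : E →ₗ[ℝ] E, A.IsSymmetric → (Q ∘ₗ A ∘ₗ Q).IsSymmetric := by
    intro A hA x y
    simp only [LinearMap.comp_apply]
    rw [hQsym (A (Q x)) y, hA (Q x) (Q y), hQsym x (A (Q y))]
  have hSsym : (Q ∘ₗ Ψ ∘ₗ Q).IsSymmetric := hconj Ψ hΨsym
  have hDsym : (Q ∘ₗ Δ ∘ₗ Q).IsSymmetric := hconj Δ hΔsym
  have hSnorm : lmOpNorm (Q ∘ₗ Ψ ∘ₗ Q) ≤ a := by
    apply lmOpNorm_le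
    intro x hx
    have h1 : ‖(Q ∘ₗ Ψ ∘ₗ Q) x‖ = ‖Q (Ψ (Q x))‖ := rfl
    have h2 : ‖Q (Ψ (Q x))‖ ≤ ‖Ψ (Q x)‖ := hQcontr _
    have h3 : ‖Ψ (Q x)‖ ≤ a * ‖Q x‖ := apply_le_mul Ψ _
    have h4 : ‖Q x‖ ≤ 1 := (hQcontr x).trans hx
    have h5 : a * ‖Q x‖ ≤ a * 1 := mul_le_mul_of_nonneg_left h4 ha0
    rw [h1]
    linarith only [h2, h3, h5]
  -- trace collapse: tr((QAQ)(QBQ)) = tr(B (QAQ))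
  have hcollapse : ∀ A B : E →ₗ[ℝ] E,
      LinearMap.trace ℝ E ((Q ∘ₗ A ∘ₗ Q) ∘ₗ (Q ∘ₗ B ∘ₗ Q))
        = LinearMap.trace ℝ E (B ∘ₗ (Q ∘ₗ A ∘ₗ Q)) := by
    intro A B
    have e1 : (Q ∘ₗ A ∘ₗ Q) ∘ₗ (Q ∘ₗ B ∘ₗ Q) = ((Q ∘ₗ A ∘ₗ Q) ∘ₗ B) ∘ₗ Q := by
      ext x
      simp only [LinearMap.comp_apply]
      rw [hQQx (B (Q x))]
    have e2 : Q ∘ₗ ((Q ∘ₗ A ∘ₗ Q) ∘ₗ B) = (Q ∘ₗ A ∘ₗ Q) ∘ₗ B := by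
      ext x
      simp only [LinearMap.comp_apply]
      rw [hQQx (A (Q (B x)))]
    rw [e1, LinearMap.trace_comp_comm', e2, LinearMap.trace_comp_comm']
  -- tr(S S) = trΨ² - 2b + c²
  have hPΨPx : ∀ x, P (Ψ (P x)) = ⟪u, Ψ u⟫ • P x := by
    intro x
    simp only [hPdef, proj_apply]
    rw [map_smul, real_inner_smul_right]
    module
  have hQΨQ : Q ∘ₗ Ψ ∘ₗ Q = Ψ - Ψ ∘ₗ P - P ∘ₗ Ψ + P ∘ₗ (Ψ ∘ₗ P) := by
    ext x
    simp only [LinearMap.comp_apply, LinearMap.sub_apply, LinearMap.add_apply]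
    rw [hQx x, hQx (Ψ (x - P x)), map_sub Ψ x (P x), map_sub P]
    abel
  have hτΨP : LinearMap.trace ℝ E (Ψ ∘ₗ P) = ⟪u, Ψ u⟫ := by
    rw [hPdef]; exact trace_comp_proj Ψ u
  have hτΨΨP : LinearMap.trace ℝ E ((Ψ ∘ₗ Ψ) ∘ₗ P) = ⟪u, Ψ (Ψ u)⟫ := by
    rw [hPdef]; exact trace_comp_proj (Ψ ∘ₗ Ψ) u
  have hτSS : LinearMap.trace ℝ E ((Q ∘ₗ Ψ ∘ₗ Q) ∘ₗ (Q ∘ₗ Ψ ∘ₗ Q))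
      = LinearMap.trace ℝ E (Ψ ∘ₗ Ψ) - 2 * ⟪u, Ψ (Ψ u)⟫ + ⟪u, Ψ u⟫ ^ 2 := by
    rw [hcollapse Ψ Ψ, hQΨQ]
    rw [LinearMap.comp_add, LinearMap.comp_sub, LinearMap.comp_sub, map_add, map_sub,
      map_sub]
    have e3 : Ψ ∘ₗ (Ψ ∘ₗ P) = (Ψ ∘ₗ Ψ) ∘ₗ P := by rw [LinearMap.comp_assoc]
    have e4 : LinearMap.trace ℝ E (Ψ ∘ₗ (P ∘ₗ Ψ)) = ⟪u, Ψ (Ψ u)⟫ := by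
      rw [← LinearMap.comp_assoc, LinearMap.trace_comp_comm', e3, hτΨΨP]
    have e5 : Ψ ∘ₗ (P ∘ₗ (Ψ ∘ₗ P)) = Ψ ∘ₗ (⟪u, Ψ u⟫ • P) := by
      congr 1
      ext x
      simp only [LinearMap.comp_apply, LinearMap.smul_apply]
      rw [hPΨPx x]
    have e6 : LinearMap.trace ℝ E (Ψ ∘ₗ (⟪u, Ψ u⟫ • P)) = ⟪u, Ψ u⟫ * ⟪u, Ψ u⟫ := by
      have : Ψ ∘ₗ (⟪u, Ψ u⟫ • P) = ⟪u, Ψ u⟫ • (Ψ ∘ₗ P) := by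
        ext x; simp
      rw [this, map_smul, smul_eq_mul, hτΨP]
    rw [e3, e4, e5, e6, hτΨΨP]
    ring
  have hbc : ⟪u, Ψ (Ψ u)⟫ ≤ a * ⟪u, Ψ u⟫ := by
    have h1 := hposform u
    simp only [LinearMap.sub_apply, LinearMap.smul_apply, LinearMap.comp_apply,
      inner_sub_right, real_inner_smul_right] at h1
    linarith only [h1]
  have hτSS_ge : s ≤ LinearMap.trace ℝ E ((Q ∘ₗ Ψ ∘ₗ Q) ∘ₗ (Q ∘ₗ Ψ ∘ₗ Q)) := by
    have h1 : LinearMap.trace ℝ E (Ψ ∘ₗ Ψ) = s + a ^ 2 := by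
      rw [← Lam1sq, ht1]
    rw [hτSS, h1]
    linarith only [sq_nonneg (a - ⟪u, Ψ u⟫), hbc]
  -- Lam2sq Φ = tr((QΦQ)²)
  have hQΦQ : Q ∘ₗ Φ ∘ₗ Q = Φ - μ • P := by
    ext x
    simp only [LinearMap.comp_apply, LinearMap.sub_apply, LinearMap.smul_apply]
    rw [hQx x, hQx (Φ (x - P x)), map_sub Φ x (P x), hΦPx x, map_sub P, hPΦx x,
      map_smul, hPPx x]
    abel
  have hμμ : Φ (Φ u) = (μ * μ) • u := by
    rw [huΦ, map_smul, huΦ, smul_smul]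
  have hG : Lam2sq Φ = LinearMap.trace ℝ E ((Q ∘ₗ Φ ∘ₗ Q) ∘ₗ (Q ∘ₗ Φ ∘ₗ Q)) := by
    rw [hQΦQ]
    have hexp2 : (Φ - μ • P) ∘ₗ (Φ - μ • P)
        = Φ ∘ₗ Φ - μ • (Φ ∘ₗ P) - μ • (P ∘ₗ Φ) + (μ * μ) • (P ∘ₗ P) := by
      ext x
      simp only [LinearMap.comp_apply, LinearMap.sub_apply, LinearMap.smul_apply,
        LinearMap.add_apply, map_sub, map_smul]
      module
    have hcΦP : Φ ∘ₗ P = μ • P := by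
      ext x
      simp only [LinearMap.comp_apply, LinearMap.smul_apply]
      exact hΦPx x
    have hcPΦ : P ∘ₗ Φ = μ • P := by
      ext x
      simp only [LinearMap.comp_apply, LinearMap.smul_apply]
      exact hPΦx x
    have hcPP : P ∘ₗ P = P := by
      ext x
      simp only [LinearMap.comp_apply]
      exact hPPx x
    rw [hexp2, hcΦP, hcPΦ, hcPP, Lam2sq, ← hμdef]
    simp only [map_add, map_sub, map_smul, smul_eq_mul, hτP]
    ring
  have hGSD : Q ∘ₗ Φ ∘ₗ Q = (Q ∘ₗ Ψ ∘ₗ Q) + (Q ∘ₗ Δ ∘ₗ Q) := by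
    rw [hΦeq, LinearMap.add_comp, LinearMap.comp_add]
  have hτSD : LinearMap.trace ℝ E ((Q ∘ₗ Ψ ∘ₗ Q) ∘ₗ (Q ∘ₗ Δ ∘ₗ Q))
      = LinearMap.trace ℝ E (Δ ∘ₗ (Q ∘ₗ Ψ ∘ₗ Q)) := hcollapse Ψ Δ
  have hτDS : LinearMap.trace ℝ E ((Q ∘ₗ Δ ∘ₗ Q) ∘ₗ (Q ∘ₗ Ψ ∘ₗ Q))
      = LinearMap.trace ℝ E ((Q ∘ₗ Ψ ∘ₗ Q) ∘ₗ (Q ∘ₗ Δ ∘ₗ Q)) :=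
    LinearMap.trace_comp_comm' _ _
  have hτDD : 0 ≤ LinearMap.trace ℝ E ((Q ∘ₗ Δ ∘ₗ Q) ∘ₗ (Q ∘ₗ Δ ∘ₗ Q)) :=
    trace_sq_nonneg hDsym
  have hτΔS := htrick (Q ∘ₗ Ψ ∘ₗ Q) hSsym hSnorm
  have hL2 : s / 2 ≤ Lam2sq Φ := by
    have h1 : Lam2sq Φ
        = LinearMap.trace ℝ E ((Q ∘ₗ Ψ ∘ₗ Q) ∘ₗ (Q ∘ₗ Ψ ∘ₗ Q))
          + 2 * LinearMap.trace ℝ E (Δ ∘ₗ (Q ∘ₗ Ψ ∘ₗ Q))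
          + LinearMap.trace ℝ E ((Q ∘ₗ Δ ∘ₗ Q) ∘ₗ (Q ∘ₗ Δ ∘ₗ Q)) := by
      rw [hG, hGSD, LinearMap.add_comp, LinearMap.comp_add, LinearMap.comp_add, map_add,
        map_add, map_add, hτSD, hτDS, hτSD]
      ring
    linarith only [h1, hτSS_ge, hτΔS, hτDD, h2aδ]
  refine ⟨?_, htrΦ⟩
  -- varkappa comparison
  have hL2Φpos : 0 < Lam2sq Φ := lt_of_lt_of_le (by linarith only [hΛ₂]) hL2
  have hL1Φpos : 0 < Lam1sq Φ := lt_of_lt_of_le (by linarith only [hL1pos]) hL1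
  have hq : (0:ℝ) < Real.sqrt (Lam1sq Ψ) * Real.sqrt (Lam2sq Ψ) :=
    mul_pos (Real.sqrt_pos.mpr hL1pos) (Real.sqrt_pos.mpr hΛ₂)
  have hp : Real.sqrt (Lam1sq Ψ) * Real.sqrt (Lam2sq Ψ) / 2
      ≤ Real.sqrt (Lam1sq Φ) * Real.sqrt (Lam2sq Φ) := by
    have h1 : Real.sqrt (Lam1sq Ψ / 2) ≤ Real.sqrt (Lam1sq Φ) := Real.sqrt_le_sqrt hL1
    have h2 : Real.sqrt (s / 2) ≤ Real.sqrt (Lam2sq Φ) := Real.sqrt_le_sqrt hL2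
    have h3 : Real.sqrt (Lam1sq Ψ / 2) * Real.sqrt (s / 2)
        = Real.sqrt (Lam1sq Ψ) * Real.sqrt s / 2 := by
      rw [Real.sqrt_div hL1pos.le, Real.sqrt_div hΛ₂.le]
      rw [div_mul_div_comm, Real.mul_self_sqrt (by norm_num : (0:ℝ) ≤ 2)]
    calc Real.sqrt (Lam1sq Ψ) * Real.sqrt (Lam2sq Ψ) / 2
        = Real.sqrt (Lam1sq Ψ / 2) * Real.sqrt (s / 2) := by rw [h3, hsdef]
      _ ≤ Real.sqrt (Lam1sq Φ) * Real.sqrt (Lam2sq Φ) :=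
          mul_le_mul h1 h2 (Real.sqrt_nonneg _) (Real.sqrt_nonneg _)
  rw [varkappa, varkappa]
  have h4 : Real.sqrt (Real.sqrt (Lam1sq Ψ) * Real.sqrt (Lam2sq Ψ) / 2)
      ≤ Real.sqrt (Real.sqrt (Lam1sq Φ) * Real.sqrt (Lam2sq Φ)) := Real.sqrt_le_sqrt hp
  have h5 : (0:ℝ) < Real.sqrt (Real.sqrt (Lam1sq Ψ) * Real.sqrt (Lam2sq Ψ) / 2) :=
    Real.sqrt_pos.mpr (by positivity)
  have h6 : (Real.sqrt (Real.sqrt (Lam1sq Φ) * Real.sqrt (Lam2sq Φ)))⁻¹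
      ≤ (Real.sqrt (Real.sqrt (Lam1sq Ψ) * Real.sqrt (Lam2sq Ψ) / 2))⁻¹ := by
    apply inv_anti₀ h5 h4
  refine h6.trans ?_
  rw [Real.sqrt_div hq.le]
  rw [inv_div]
  have h7 : (0:ℝ) < Real.sqrt (Real.sqrt (Lam1sq Ψ) * Real.sqrt (Lam2sq Ψ)) :=
    Real.sqrt_pos.mpr hq
  rw [div_eq_mul_inv]
  have h8 : Real.sqrt 2 ≤ 2 := by
    have h9 := Real.sqrt_le_sqrt (by norm_num : (2:ℝ) ≤ 4)
    have h10 : Real.sqrt 4 = 2 := by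
      rw [show (4:ℝ) = 2 ^ 2 by norm_num, Real.sqrt_sq (by norm_num : (0:ℝ) ≤ 2)]
    rwa [h10] at h9
  exact mul_le_mul_of_nonneg_right h8 (by positivity)

end BWB8
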